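/- arXiv:2601.10501 — 2 statements merged into one kernel-verified Lean document; each statement's English description precedes it below -/
import Mathlib

section
/- Consider maximizing ∑_{i=1}^n log p_i over p_1,…,p_n > 0 subject to ∑_i p_i = 1 and ∑_i p_i g_i = 0, where g_1,…,g_n are fixed reals such that 0 is in the interior of the convex hull of {g_1,…,g_n}. The maximizer is p_i = n^{-1} / (1 + λ g_i), where λ is the unique solution in the interval (−1/max_i g_i, −1/min_i g_i) of ∑_{i=1}^n g_i/(1 + λ g_i) = 0. -/
open Finset

lemma aux_denom_pos {m M lam x : ℝ} (hm : m < 0) (hM : 0 < M)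
    (hx1 : m ≤ x) (hx2 : x ≤ M) (h1 : -1 / M < lam) (h2 : lam < -1 / m) :
    0 < 1 + lam * x := by
  have hMm : -1 < lam * M := by
    have := (div_lt_iff₀ hM).1 h1; linarith
  have hmm : -1 < lam * m := by
    have := (lt_div_iff_of_neg hm).1 h2; linarith
  rcases le_or_gt x 0 with hx | hx
  · rcases le_or_gt lam 0 with hl | hl
    · nlinarith
    · nlinarith [mul_le_mul_of_nonneg_left hx1 hl.le]
  · rcases le_or_gt lam 0 with hl | hl
    · nlinarith [mul_le_mul_of_nonpos_left hx2 hl]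
    · nlinarith

lemma aux_term_ge {m lam x : ℝ} (hm : m < 0) (hl : lam ≤ 0)
    (hd : 0 < 1 + lam * x) (hx : m ≤ x) : m ≤ x / (1 + lam * x) := by
  rcases le_or_gt x 0 with h | h
  · have hd1 : 1 ≤ 1 + lam * x := by nlinarith
    have : x ≤ x / (1 + lam * x) := by
      rw [le_div_iff₀ hd]; nlinarith
    linarith
  · have : 0 < x / (1 + lam * x) := div_pos h hd
    linarith

lemma aux_term_le {M lam x : ℝ} (hM : 0 < M) (hl : 0 ≤ lam)
    (hd : 0 < 1 + lam * x) (hx : x ≤ M) : x / (1 + lam * x) ≤ M := by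
  have hd' : 0 < 1 + (-lam) * (-x) := by ring_nf; ring_nf at hd; linarith
  have := aux_term_ge (m := -M) (lam := -lam) (x := -x) (by linarith)
    (by linarith) hd' (by linarith)
  have e : (-x) / (1 + (-lam) * (-x)) = -(x / (1 + lam * x)) := by ring_nf
  rw [e] at this; linarith

lemma aux_mono {a b x : ℝ} (hab : a ≤ b) (hda : 0 < 1 + a * x) (hdb : 0 < 1 + b * x) :
    x / (1 + b * x) ≤ x / (1 + a * x) := by
  rw [div_le_div_iff₀ hdb hda]; nlinarith [sq_nonneg x]

lemma aux_mono_strict {a b x : ℝ} (hab : a < b) (hx : x ≠ 0)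
    (hda : 0 < 1 + a * x) (hdb : 0 < 1 + b * x) :
    x / (1 + b * x) < x / (1 + a * x) := by
  rw [div_lt_div_iff₀ hdb hda]
  have : 0 < x ^ 2 := by positivity
  nlinarith

lemma aux_la_term {M e : ℝ} (hM : 0 < M) (he : 0 < e) :
    M / (1 + (-1 / M + e) * M) = 1 / e := by
  have h : 1 + (-1 / M + e) * M = e * M := by field_simp; ring
  rw [h, div_eq_div_iff (by positivity) (by positivity)]; ring

lemma aux_lb_term {m e : ℝ} (hm : m < 0) (he : 0 < e) :
    m / (1 + (-1 / m - e) * m) = -(1 / e) := by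
  have hm0 : m ≠ 0 := ne_of_lt hm
  have h : 1 + (-1 / m - e) * m = e * (-m) := by field_simp; ring
  have hne : e * (-m) ≠ 0 := by
    have : 0 < e * (-m) := mul_pos he (by linarith)
    exact this.ne'
  rw [h, div_eq_iff hne]
  field_simp

theorem stmt7 (n : ℕ) (hn : 2 ≤ n) (g : Fin n → ℝ)
    (hne : (Finset.univ : Finset (Fin n)).Nonempty)
    (hmin : Finset.univ.inf' hne g < 0) (hmax : 0 < Finset.univ.sup' hne g) :
    ∃ lam : ℝ,
      (lam ∈ Set.Ioo (-1 / Finset.univ.sup' hne g) (-1 / Finset.univ.inf' hne g) ∧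
        ∑ i, g i / (1 + lam * g i) = 0) ∧
      (∀ lam' : ℝ,
        lam' ∈ Set.Ioo (-1 / Finset.univ.sup' hne g) (-1 / Finset.univ.inf' hne g) ∧
          ∑ i, g i / (1 + lam' * g i) = 0 → lam' = lam) ∧
      (∀ q : Fin n → ℝ, (∀ i, 0 < q i) → ∑ i, q i = 1 → ∑ i, q i * g i = 0 →
        ∑ i, Real.log (q i) ≤ ∑ i, Real.log ((n : ℝ)⁻¹ / (1 + lam * g i))) := by
  set M := Finset.univ.sup' hne g with hMdef
  set m := Finset.univ.inf' hne g with hmdef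
  have hgM : ∀ i, g i ≤ M := fun i => Finset.le_sup' g (mem_univ i)
  have hgm : ∀ i, m ≤ g i := fun i => Finset.inf'_le g (mem_univ i)
  obtain ⟨iM, -, hiM⟩ := Finset.exists_mem_eq_sup' hne g
  obtain ⟨im, -, him⟩ := Finset.exists_mem_eq_inf' hne g
  set f : ℝ → ℝ := fun lam => ∑ i, g i / (1 + lam * g i) with hfdef
  have hden : ∀ lam ∈ Set.Ioo (-1 / M) (-1 / m), ∀ i, 0 < 1 + lam * g i :=
    fun lam hl i => aux_denom_pos hmin hmax (hgm i) (hgM i) hl.1 hl.2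
  have hanti : ∀ a ∈ Set.Ioo (-1 / M) (-1 / m), ∀ b ∈ Set.Ioo (-1 / M) (-1 / m),
      a < b → f b < f a := by
    intro a ha b hb hab
    apply Finset.sum_lt_sum
    · intro i _
      exact aux_mono hab.le (hden a ha i) (hden b hb i)
    · refine ⟨iM, mem_univ iM, ?_⟩
      have : g iM ≠ 0 := by rw [← hiM]; exact ne_of_gt hmax
      exact aux_mono_strict hab this (hden a ha iM) (hden b hb iM)
  -- choose endpoints
  have hn1 : (1 : ℝ) ≤ (n : ℝ) - 1 := by
    have : (2 : ℝ) ≤ (n : ℝ) := by exact_mod_cast hn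
    linarith
  have hm' : (0:ℝ) < -m := by linarith
  have hA : (0:ℝ) < ((n:ℝ) - 1) * (-m) := mul_pos (by linarith) hm'
  have hB : (0:ℝ) < ((n:ℝ) - 1) * M := mul_pos (by linarith) hmax
  have hMinv : (0:ℝ) < 1 / M := by positivity
  have hminv : (0:ℝ) < -1 / m := by
    rw [neg_div, ← one_div_neg_eq_neg_one_div]
    exact one_div_pos.2 hm'
  have hAinv : (0:ℝ) < 1 / (((n:ℝ) - 1) * (-m)) := one_div_pos.2 hA
  have hBinv : (0:ℝ) < 1 / (((n:ℝ) - 1) * M) := one_div_pos.2 hB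
  set ea : ℝ := (1/2) * min (1 / M) (1 / (((n:ℝ) - 1) * (-m))) with headef
  set eb : ℝ := (1/2) * min (-1 / m) (1 / (((n:ℝ) - 1) * M)) with hebdef
  have hmina : (0:ℝ) < min (1 / M) (1 / (((n:ℝ) - 1) * (-m))) := lt_min hMinv hAinv
  have hminb : (0:ℝ) < min (-1 / m) (1 / (((n:ℝ) - 1) * M)) := lt_min hminv hBinv
  have hea_pos : 0 < ea := by rw [headef]; linarith
  have heb_pos : 0 < eb := by rw [hebdef]; linarith
  have hea1 : ea < 1 / M := by
    have := min_le_left (1 / M) (1 / (((n:ℝ) - 1) * (-m)))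
    rw [headef]; linarith
  have hea2 : ea < 1 / (((n:ℝ) - 1) * (-m)) := by
    have := min_le_right (1 / M) (1 / (((n:ℝ) - 1) * (-m)))
    rw [headef]; linarith
  have heb1 : eb < -1 / m := by
    have := min_le_left (-1 / m) (1 / (((n:ℝ) - 1) * M))
    rw [hebdef]; linarith
  have heb2 : eb < 1 / (((n:ℝ) - 1) * M) := by
    have := min_le_right (-1 / m) (1 / (((n:ℝ) - 1) * M))
    rw [hebdef]; linarith
  clear_value ea eb
  clear headef hebdef hmina hminb
  set la : ℝ := -1 / M + ea with hladef
  set lb : ℝ := -1 / m - eb with hlbdef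
  have hnM : -1 / M = -(1 / M) := by ring
  have hla_neg : la < 0 := by rw [hladef, hnM]; linarith
  have hlb_pos : 0 < lb := by rw [hlbdef]; linarith
  have hla_mem : la ∈ Set.Ioo (-1 / M) (-1 / m) := by
    constructor
    · rw [hladef]; linarith
    · linarith
  have hlb_mem : lb ∈ Set.Ioo (-1 / M) (-1 / m) := by
    constructor
    · rw [hnM]; linarith
    · rw [hlbdef]; linarith
  have hcast : ((n - 1 : ℕ) : ℝ) = (n:ℝ) - 1 := by
    have h1 : (1:ℕ) ≤ n := by omega
    push_cast [Nat.cast_sub h1]; ring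
  -- f la > 0
  have hfla : 0 < f la := by
    have hsplit : f la = g iM / (1 + la * g iM) + ∑ i ∈ univ.erase iM, g i / (1 + la * g i) := by
      rw [hfdef]; exact (Finset.add_sum_erase univ _ (mem_univ iM)).symm
    have hterm : g iM / (1 + la * g iM) = 1 / ea := by
      rw [← hiM, hladef]; exact aux_la_term hmax hea_pos
    have hrest : ((n:ℝ) - 1) * m ≤ ∑ i ∈ univ.erase iM, g i / (1 + la * g i) := by
      have h := Finset.card_nsmul_le_sum (univ.erase iM) (fun i => g i / (1 + la * g i)) m
        (fun i _ => aux_term_ge hmin hla_neg.le (hden la hla_mem i) (hgm i))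
      have hcard : (univ.erase iM).card = n - 1 := by
        rw [Finset.card_erase_of_mem (mem_univ iM), Finset.card_univ, Fintype.card_fin]
      rw [hcard, nsmul_eq_mul, hcast] at h
      exact h
    have hinv : ((n:ℝ) - 1) * (-m) < 1 / ea := by
      rw [lt_div_iff₀ hea_pos]
      calc ((n:ℝ) - 1) * (-m) * ea < ((n:ℝ) - 1) * (-m) * (1 / (((n:ℝ) - 1) * (-m))) :=
            mul_lt_mul_of_pos_left hea2 hA
        _ = 1 := mul_one_div_cancel hA.ne'
    have hid : ((n:ℝ) - 1) * (-m) = -(((n:ℝ) - 1) * m) := by ring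
    rw [hsplit, hterm]
    rw [hid] at hinv
    linarith
  -- f lb < 0
  have hflb : f lb < 0 := by
    have hsplit : f lb = g im / (1 + lb * g im) + ∑ i ∈ univ.erase im, g i / (1 + lb * g i) := by
      rw [hfdef]; exact (Finset.add_sum_erase univ _ (mem_univ im)).symm
    have hterm : g im / (1 + lb * g im) = -(1 / eb) := by
      rw [← him, hlbdef]; exact aux_lb_term hmin heb_pos
    have hrest : ∑ i ∈ univ.erase im, g i / (1 + lb * g i) ≤ ((n:ℝ) - 1) * M := by
      have h := Finset.sum_le_card_nsmul (univ.erase im) (fun i => g i / (1 + lb * g i)) M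
        (fun i _ => aux_term_le hmax hlb_pos.le (hden lb hlb_mem i) (hgM i))
      have hcard : (univ.erase im).card = n - 1 := by
        rw [Finset.card_erase_of_mem (mem_univ im), Finset.card_univ, Fintype.card_fin]
      rw [hcard, nsmul_eq_mul, hcast] at h
      exact h
    have hinv : ((n:ℝ) - 1) * M < 1 / eb := by
      rw [lt_div_iff₀ heb_pos]
      calc ((n:ℝ) - 1) * M * eb < ((n:ℝ) - 1) * M * (1 / (((n:ℝ) - 1) * M)) :=
            mul_lt_mul_of_pos_left heb2 hB
        _ = 1 := mul_one_div_cancel hB.ne'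
    rw [hsplit, hterm]
    linarith
  -- IVT
  have hlalb : la < lb := lt_trans hla_neg hlb_pos
  have hIccsub : Set.Icc la lb ⊆ Set.Ioo (-1 / M) (-1 / m) := by
    intro x hx
    exact ⟨lt_of_lt_of_le hla_mem.1 hx.1, lt_of_le_of_lt hx.2 hlb_mem.2⟩
  have hcont : ContinuousOn f (Set.Icc la lb) := by
    rw [hfdef]
    apply continuousOn_finset_sum
    intro i _
    apply ContinuousOn.div continuousOn_const
    · exact (continuous_const.add (continuous_id.mul continuous_const)).continuousOn
    · intro x hx
      exact (hden x (hIccsub hx) i).ne'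
  have hivt := intermediate_value_Icc' hlalb.le hcont
  have h0mem : (0:ℝ) ∈ Set.Icc (f lb) (f la) := ⟨hflb.le, hfla.le⟩
  obtain ⟨lam, hlam_mem, hlam_eq⟩ := hivt h0mem
  have hlamI : lam ∈ Set.Ioo (-1 / M) (-1 / m) := hIccsub hlam_mem
  refine ⟨lam, ⟨hlamI, hlam_eq⟩, ?_, ?_⟩
  · -- uniqueness
    intro lam' hpair
    obtain ⟨hl'I, hl'eq⟩ := hpair
    have e' : f lam' = 0 := hl'eq
    by_contra hne'
    rcases lt_or_gt_of_ne hne' with h | h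
    · have := hanti lam' hl'I lam hlamI h
      rw [hlam_eq, e'] at this
      exact lt_irrefl 0 this
    · have := hanti lam hlamI lam' hl'I h
      rw [hlam_eq, e'] at this
      exact lt_irrefl 0 this
  · -- optimality
    intro q hq hq1 hq0
    have hdl : ∀ i, 0 < 1 + lam * g i := hden lam hlamI
    have hnpos : (0:ℝ) < n := by positivity
    set p : Fin n → ℝ := fun i => (n : ℝ)⁻¹ / (1 + lam * g i) with hpdef
    have hp : ∀ i, 0 < p i := fun i => div_pos (by positivity) (hdl i)
    -- ∑ q_i / p_i = n
    have hqp : ∑ i, q i / p i = n := by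
      have hterm : ∀ i, q i / p i = (n:ℝ) * q i + (n:ℝ) * lam * (q i * g i) := by
        intro i
        simp only [hpdef]
        rw [div_div_eq_mul_div, div_eq_mul_inv, inv_inv]
        ring
      rw [Finset.sum_congr rfl (fun i _ => hterm i), Finset.sum_add_distrib,
        ← Finset.mul_sum, ← Finset.mul_sum, hq1, hq0]
      ring
    -- log comparison
    have hlog : ∀ i, Real.log (q i) - Real.log (p i) ≤ q i / p i - 1 := by
      intro i
      have h1 : Real.log (q i / p i) ≤ q i / p i - 1 :=
        Real.log_le_sub_one_of_pos (div_pos (hq i) (hp i))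
      rw [Real.log_div (hq i).ne' (hp i).ne'] at h1
      exact h1
    calc ∑ i, Real.log (q i)
        = ∑ i, Real.log (p i) + ∑ i, (Real.log (q i) - Real.log (p i)) := by
          rw [← Finset.sum_add_distrib]; simp
      _ ≤ ∑ i, Real.log (p i) + ∑ i, (q i / p i - 1) := by
          have := Finset.sum_le_sum (fun i (_ : i ∈ univ) => hlog i)
          linarith
      _ = ∑ i, Real.log (p i) + (∑ i, q i / p i - n) := by
          rw [Finset.sum_sub_distrib]
          simp [Finset.card_univ]
      _ = ∑ i, Real.log (p i) := by rw [hqp]; ring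
end

section
/- Let λ ↦ φ(λ) = ∑_{i=1}^n g_i/(1 + λ g_i) on the open interval I = (−1/max_i g_i, −1/min_i g_i), where min_i g_i < 0 < max_i g_i. Then φ is strictly decreasing on I, φ(λ) → +∞ as λ → inf I⁺ and φ(λ) → −∞ as λ → sup I⁻, so φ has a unique zero in I. -/
open Finset Filter

theorem stmt8 (n : ℕ) (g : Fin n → ℝ)
    (hne : (Finset.univ : Finset (Fin n)).Nonempty)
    (hmin : Finset.univ.inf' hne g < 0) (hmax : 0 < Finset.univ.sup' hne g)
    (a b : ℝ) (ha : a = -1 / Finset.univ.sup' hne g) (hb : b = -1 / Finset.univ.inf' hne g)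
    (φ : ℝ → ℝ) (hφ : ∀ lam, φ lam = ∑ i, g i / (1 + lam * g i)) :
    StrictAntiOn φ (Set.Ioo a b) ∧
    Tendsto φ (nhdsWithin a (Set.Ioi a)) atTop ∧
    Tendsto φ (nhdsWithin b (Set.Iio b)) atBot ∧
    ∃! lam, lam ∈ Set.Ioo a b ∧ φ lam = 0 := by
  set s := Finset.univ.sup' hne g with hs
  set m := Finset.univ.inf' hne g with hm
  have hsne : s ≠ 0 := ne_of_gt hmax
  have hmne : m ≠ 0 := ne_of_lt hmin
  have ha0 : a < 0 := by rw [ha]; exact div_neg_of_neg_of_pos (by norm_num) hmax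
  have hb0 : 0 < b := by
    rw [hb, div_pos_iff]; right; exact ⟨by norm_num, hmin⟩
  have hab : a < b := lt_trans ha0 hb0
  have has : 1 + a * s = 0 := by rw [ha]; field_simp; norm_num
  have hbm : 1 + b * m = 0 := by rw [hb]; field_simp; norm_num
  -- positivity of denominators
  have hpos : ∀ lam ∈ Set.Ioo a b, ∀ i, 0 < 1 + lam * g i := by
    rintro lam ⟨h1, h2⟩ i
    rcases lt_trichotomy (g i) 0 with hgi | hgi | hgi
    · have hmg : m ≤ g i := inf'_le g (mem_univ i)
      have hlm : -1 < lam * m := by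
        have := (lt_div_iff_of_neg hmin).mp (hb ▸ h2)
        linarith [this]
      rcases le_or_gt 0 lam with hl | hl
      · have : lam * m ≤ lam * g i := mul_le_mul_of_nonneg_left hmg hl
        linarith
      · have : 0 < lam * g i := mul_pos_of_neg_of_neg hl hgi
        linarith
    · simp [hgi]
    · have hgs : g i ≤ s := le_sup' g (mem_univ i)
      have hls : -1 < lam * s := by
        have := (div_lt_iff₀ hmax).mp (ha ▸ h1)
        linarith [this]
      rcases le_or_gt lam 0 with hl | hl
      · have : lam * s ≤ lam * g i := mul_le_mul_of_nonpos_left hgs hl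
        linarith
      · have : 0 < lam * g i := mul_pos hl hgi
        linarith
  obtain ⟨i0, -, hi0⟩ := Finset.exists_mem_eq_sup' hne g
  obtain ⟨i1, -, hi1⟩ := Finset.exists_mem_eq_inf' hne g
  -- strict antitonicity
  have hanti : StrictAntiOn φ (Set.Ioo a b) := by
    intro x hx y hy hxy
    rw [hφ, hφ]
    apply Finset.sum_lt_sum
    · intro i _
      have hdx := hpos x hx i
      have hdy := hpos y hy i
      rw [div_le_div_iff₀ hdy hdx]
      nlinarith [sq_nonneg (g i)]
    · refine ⟨i0, mem_univ i0, ?_⟩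
      have hdx := hpos x hx i0
      have hdy := hpos y hy i0
      have hg0 : 0 < g i0 := hi0 ▸ hmax
      rw [div_lt_div_iff₀ hdy hdx]
      nlinarith [mul_pos (mul_pos (sub_pos.mpr hxy) hg0) hg0]
  -- continuity on Ioo
  have hcont : ContinuousOn φ (Set.Ioo a b) := by
    have : ContinuousOn (fun lam => ∑ i, g i / (1 + lam * g i)) (Set.Ioo a b) := by
      apply continuousOn_finset_sum
      intro i _
      exact ContinuousOn.div continuousOn_const
        (continuousOn_const.add (continuousOn_id.mul continuousOn_const))
        (fun lam hlam => ne_of_gt (hpos lam hlam i))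
    exact this.congr fun lam _ => hφ lam
  -- split of φ near a
  have hsplitA : ∀ lam, φ lam =
      ((univ.filter fun i => g i = s).card : ℝ) * (s / (1 + lam * s)) +
      ∑ i ∈ univ.filter fun i => ¬ g i = s, g i / (1 + lam * g i) := by
    intro lam
    rw [hφ, ← Finset.sum_filter_add_sum_filter_not univ (fun i => g i = s)]
    congr 1
    rw [Finset.sum_congr rfl (fun i hi => by
      rw [(Finset.mem_filter.mp hi).2]), Finset.sum_const, nsmul_eq_mul]
  have hsplitB : ∀ lam, φ lam =
      ((univ.filter fun i => g i = m).card : ℝ) * (m / (1 + lam * m)) +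
      ∑ i ∈ univ.filter fun i => ¬ g i = m, g i / (1 + lam * g i) := by
    intro lam
    rw [hφ, ← Finset.sum_filter_add_sum_filter_not univ (fun i => g i = m)]
    congr 1
    rw [Finset.sum_congr rfl (fun i hi => by
      rw [(Finset.mem_filter.mp hi).2]), Finset.sum_const, nsmul_eq_mul]
  have hcardA : (0:ℝ) < ((univ.filter fun i => g i = s).card : ℝ) := by
    have : i0 ∈ univ.filter fun i => g i = s := by simp [hi0.symm]; rfl
    exact_mod_cast Finset.card_pos.mpr ⟨i0, this⟩
  have hcardB : (0:ℝ) < ((univ.filter fun i => g i = m).card : ℝ) := by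
    have : i1 ∈ univ.filter fun i => g i = m := by simp [hi1.symm]; rfl
    exact_mod_cast Finset.card_pos.mpr ⟨i1, this⟩
  -- tendsto atTop near a
  have hdenA : Tendsto (fun lam => 1 + lam * s) (nhdsWithin a (Set.Ioi a)) (nhdsWithin 0 (Set.Ioi 0)) := by
    apply tendsto_nhdsWithin_of_tendsto_nhds_of_eventually_within
    · have : Tendsto (fun lam => 1 + lam * s) (nhds a) (nhds (1 + a * s)) := by
        exact (continuous_const.add (continuous_id.mul continuous_const)).tendsto a
      rw [has] at this
      exact this.mono_left nhdsWithin_le_nhds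
    · filter_upwards [self_mem_nhdsWithin] with lam hlam
      have : a * s < lam * s := mul_lt_mul_of_pos_right hlam hmax
      simp only [Set.mem_Ioi]
      linarith
  have hTa : Tendsto φ (nhdsWithin a (Set.Ioi a)) atTop := by
    rw [show φ = fun lam => ((univ.filter fun i => g i = s).card : ℝ) * (s / (1 + lam * s)) +
      ∑ i ∈ univ.filter fun i => ¬ g i = s, g i / (1 + lam * g i) from funext hsplitA]
    apply Filter.Tendsto.atTop_add
    · have h1 : Tendsto (fun lam => (1 + lam * s)⁻¹) (nhdsWithin a (Set.Ioi a)) atTop :=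
        tendsto_inv_nhdsGT_zero.comp hdenA
      have h2 := h1.const_mul_atTop
        (mul_pos hcardA hmax)
      refine h2.congr fun lam => by ring
    · apply tendsto_finset_sum
      intro i hi
      have hgi : g i ≠ s := by simpa using (Finset.mem_filter.mp hi).2
      have hden : 0 < 1 + a * g i := by
        rcases le_or_gt (g i) 0 with hg | hg
        · nlinarith
        · have hlt : g i < s := lt_of_le_of_ne (le_sup' g (mem_univ i)) hgi
          have : a * s < a * g i := by
            apply mul_lt_mul_of_neg_left hlt ha0
          linarith
      have : ContinuousAt (fun lam => g i / (1 + lam * g i)) a := by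
        apply ContinuousAt.div continuousAt_const
          (continuousAt_const.add (continuousAt_id.mul continuousAt_const))
          (ne_of_gt hden)
      exact this.continuousWithinAt.tendsto
  -- tendsto atBot near b
  have hdenB : Tendsto (fun lam => 1 + lam * m) (nhdsWithin b (Set.Iio b)) (nhdsWithin 0 (Set.Ioi 0)) := by
    apply tendsto_nhdsWithin_of_tendsto_nhds_of_eventually_within
    · have : Tendsto (fun lam => 1 + lam * m) (nhds b) (nhds (1 + b * m)) := by
        exact (continuous_const.add (continuous_id.mul continuous_const)).tendsto b
      rw [hbm] at this
      exact this.mono_left nhdsWithin_le_nhds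
    · filter_upwards [self_mem_nhdsWithin] with lam hlam
      have : b * m < lam * m := mul_lt_mul_of_neg_right hlam hmin
      simp only [Set.mem_Ioi]
      linarith
  have hTb : Tendsto φ (nhdsWithin b (Set.Iio b)) atBot := by
    rw [show φ = fun lam => ((univ.filter fun i => g i = m).card : ℝ) * (m / (1 + lam * m)) +
      ∑ i ∈ univ.filter fun i => ¬ g i = m, g i / (1 + lam * g i) from funext hsplitB]
    apply Filter.Tendsto.atBot_add
    · have h1 : Tendsto (fun lam => (1 + lam * m)⁻¹) (nhdsWithin b (Set.Iio b)) atTop :=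
        tendsto_inv_nhdsGT_zero.comp hdenB
      have h2 := h1.const_mul_atTop_of_neg
        (mul_neg_of_pos_of_neg hcardB hmin)
      refine h2.congr fun lam => by ring
    · apply tendsto_finset_sum
      intro i hi
      have hgi : g i ≠ m := by simpa using (Finset.mem_filter.mp hi).2
      have hden : 0 < 1 + b * g i := by
        rcases le_or_gt 0 (g i) with hg | hg
        · nlinarith
        · have hlt : m < g i := lt_of_le_of_ne (inf'_le g (mem_univ i)) (Ne.symm hgi)
          have : b * m < b * g i := mul_lt_mul_of_pos_left hlt hb0
          linarith
      have : ContinuousAt (fun lam => g i / (1 + lam * g i)) b := by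
        apply ContinuousAt.div continuousAt_const
          (continuousAt_const.add (continuousAt_id.mul continuousAt_const))
          (ne_of_gt hden)
      exact this.continuousWithinAt.tendsto
  refine ⟨hanti, hTa, hTb, ?_⟩
  -- existence of a zero
  have hxex : ∃ x, x ∈ Set.Ioo a b ∧ 0 < φ x := by
    have h1 : ∀ᶠ lam in nhdsWithin a (Set.Ioi a), 0 < φ lam := hTa.eventually_gt_atTop 0
    have h2 : ∀ᶠ lam in nhdsWithin a (Set.Ioi a), lam < b :=
      eventually_nhdsWithin_of_eventually_nhds (Filter.Tendsto.eventually_lt_const hab tendsto_id)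
    have h3 : ∀ᶠ lam in nhdsWithin a (Set.Ioi a), a < lam := eventually_mem_of_tendsto_nhdsWithin tendsto_id
    obtain ⟨x, hx1, hx2, hx3⟩ := (h1.and (h2.and h3)).exists
    exact ⟨x, ⟨hx3, hx2⟩, hx1⟩
  obtain ⟨x, hxI, hxpos⟩ := hxex
  have hyex : ∃ y, y ∈ Set.Ioo x b ∧ φ y < 0 := by
    have h1 : ∀ᶠ lam in nhdsWithin b (Set.Iio b), φ lam < 0 := hTb.eventually_lt_atBot 0
    have h2 : ∀ᶠ lam in nhdsWithin b (Set.Iio b), x < lam :=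
      eventually_nhdsWithin_of_eventually_nhds (Filter.Tendsto.eventually_const_lt hxI.2 tendsto_id)
    have h3 : ∀ᶠ lam in nhdsWithin b (Set.Iio b), lam < b := eventually_mem_of_tendsto_nhdsWithin tendsto_id
    obtain ⟨y, hy1, hy2, hy3⟩ := (h1.and (h2.and h3)).exists
    exact ⟨y, ⟨hy2, hy3⟩, hy1⟩
  obtain ⟨y, hyI, hyneg⟩ := hyex
  have hsub : Set.Icc x y ⊆ Set.Ioo a b := Set.Icc_subset_Ioo hxI.1 hyI.2
  have hzero : ∃ lam ∈ Set.Icc x y, φ lam = 0 := by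
    have := intermediate_value_Icc' (le_of_lt hyI.1) (hcont.mono hsub)
    have h0 : (0:ℝ) ∈ Set.Icc (φ y) (φ x) := ⟨le_of_lt hyneg, le_of_lt hxpos⟩
    obtain ⟨lam, hlam, hlam0⟩ := this h0
    exact ⟨lam, hlam, hlam0⟩
  obtain ⟨lam, hlamI, hlam0⟩ := hzero
  refine ⟨lam, ⟨hsub hlamI, hlam0⟩, ?_⟩
  rintro z ⟨hzI, hz0⟩
  exact hanti.injOn hzI (hsub hlamI) (by rw [hz0, hlam0])
end
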